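/- D(n) = (-1)^{δ(n)}, where δ(n) counts, in the binary expansion n = [ε_k...ε_1 ε_0]_2, the number of indices i ≥ 1 with ε_{i+1}ε_i = 10, plus 1 if ε_1ε_0 = 11. -/

import Mathlib

open Classical in
noncomputable def A (n : ℕ) : ℤ := if ∃ k : ℕ, n + 2 = 2 ^ (k + 1) then 1 else 0

noncomputable def D (n : ℕ) : ℤ :=
  Matrix.det (Matrix.of fun i j : Fin n => A ((i : ℕ) + j))

def deltaFn (n : ℕ) : ℕ :=
  ((Finset.Icc 1 n).filter (fun i => n.testBit (i + 1) = true ∧ n.testBit i = false)).card +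
    (if n.testBit 1 = true ∧ n.testBit 0 = true then 1 else 0)


def PP (n : ℕ) : ℕ := 2 ^ (Nat.size n)

def mm (n : ℕ) : ℕ := PP n - 1 - n

lemma lt_PP (n : ℕ) : n < PP n := Nat.lt_size_self n

lemma PP_eq (n : ℕ) (hn : 1 ≤ n) : PP n = 2 * 2 ^ (Nat.size n - 1) := by
  have h1 : 1 ≤ Nat.size n := Nat.size_pos.mpr hn
  rw [PP, ← pow_succ']
  congr 1
  omega

lemma half_PP_le (n : ℕ) (hn : 1 ≤ n) : 2 ^ (Nat.size n - 1) ≤ n :=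
  Nat.lt_size.mp (by have := Nat.size_pos.mpr hn; omega)

lemma PP_le (n : ℕ) (hn : 1 ≤ n) : PP n ≤ 2 * n := by
  have := half_PP_le n hn
  rw [PP_eq n hn]; omega

lemma mm_lt (n : ℕ) (hn : 1 ≤ n) : mm n < n := by
  have := PP_le n hn
  have := lt_PP n
  rw [mm]; omega

def ff (n i : ℕ) : ℕ :=
  if h : n = 0 then i
  else if mm n < i then PP n - i else ff (mm n) i
termination_by n
decreasing_by exact mm_lt n (by omega)

def TT (n : ℕ) : ℕ :=
  if h : n = 0 then 0
  else (n - 2 ^ (Nat.size n - 1)) + TT (mm n)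
decreasing_by exact mm_lt n (by omega)

lemma ff_zero (i : ℕ) : ff 0 i = i := by unfold ff; simp

lemma ff_eq (n i : ℕ) (hn : n ≠ 0) :
    ff n i = if mm n < i then PP n - i else ff (mm n) i := by
  conv_lhs => unfold ff
  simp [hn]

lemma TT_eq (n : ℕ) (hn : n ≠ 0) :
    TT n = (n - 2 ^ (Nat.size n - 1)) + TT (mm n) := by
  conv_lhs => unfold TT
  simp [hn]

lemma ff_range (n : ℕ) : ∀ i, 1 ≤ i → i ≤ n → 1 ≤ ff n i ∧ ff n i ≤ n := by
  induction n using Nat.strong_induction_on with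
  | _ n ih =>
    intro i h1 h2
    have hn : n ≠ 0 := by omega
    rw [ff_eq n i hn]
    have hP := lt_PP n
    have hP2 := PP_le n (by omega)
    have hmm : mm n = PP n - 1 - n := rfl
    split
    · omega
    · have hm : mm n < n := mm_lt n (by omega)
      have := ih (mm n) hm i h1 (by omega)
      omega

lemma ff_invol (n : ℕ) : ∀ i, 1 ≤ i → i ≤ n → ff n (ff n i) = i := by
  induction n using Nat.strong_induction_on with
  | _ n ih =>
    intro i h1 h2
    have hn : n ≠ 0 := by omega
    have hP := lt_PP n
    have hP2 := PP_le n (by omega)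
    have hm : mm n < n := mm_lt n (by omega)
    have hmm : mm n = PP n - 1 - n := rfl
    rw [ff_eq n i hn]
    split
    · rename_i h
      rw [ff_eq n _ hn]
      have : mm n < PP n - i := by omega
      simp only [if_pos this]
      omega
    · rename_i h
      push_neg at h
      have hrange := ff_range (mm n) i h1 h
      rw [ff_eq n _ hn]
      have : ¬ (mm n < ff (mm n) i) := by omega
      simp only [if_neg this]
      exact ih (mm n) hm i h1 h

lemma ff_pow (n : ℕ) : ∀ i, 1 ≤ i → i ≤ n → ∃ k : ℕ, i + ff n i = 2 ^ (k + 1) := by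
  induction n using Nat.strong_induction_on with
  | _ n ih =>
    intro i h1 h2
    have hn : n ≠ 0 := by omega
    have hP := lt_PP n
    have hs : 1 ≤ Nat.size n := Nat.size_pos.mpr (by omega)
    have hmm : mm n = PP n - 1 - n := rfl
    rw [ff_eq n i hn]
    split
    · rename_i h
      refine ⟨Nat.size n - 1, ?_⟩
      have he : Nat.size n - 1 + 1 = Nat.size n := by omega
      rw [he]
      show i + (PP n - i) = 2 ^ Nat.size n
      rw [PP] at *
      omega
    · rename_i h
      exact ih (mm n) (mm_lt n (by omega)) i h1 (by omega)

/-- the permutation of Fin n (0-based) given by ff (1-based). -/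
def tau (n : ℕ) : Equiv.Perm (Fin n) where
  toFun i := ⟨ff n ((i : ℕ) + 1) - 1, by
    have := ff_range n ((i : ℕ) + 1) (by omega) (by omega)
    omega⟩
  invFun i := ⟨ff n ((i : ℕ) + 1) - 1, by
    have := ff_range n ((i : ℕ) + 1) (by omega) (by omega)
    omega⟩
  left_inv := by
    intro i
    have h1 := ff_range n ((i : ℕ) + 1) (by omega) (by omega)
    have h2 := ff_invol n ((i : ℕ) + 1) (by omega) (by omega)
    ext
    simp only
    have : ff n ((i : ℕ) + 1) - 1 + 1 = ff n ((i : ℕ) + 1) := by omega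
    rw [this, h2]
    omega
  right_inv := by
    intro i
    have h1 := ff_range n ((i : ℕ) + 1) (by omega) (by omega)
    have h2 := ff_invol n ((i : ℕ) + 1) (by omega) (by omega)
    ext
    simp only
    have : ff n ((i : ℕ) + 1) - 1 + 1 = ff n ((i : ℕ) + 1) := by omega
    rw [this, h2]
    omega

lemma tau_apply (n : ℕ) (i : Fin n) : ((tau n i : ℕ)) = ff n ((i : ℕ) + 1) - 1 := rfl

/-- Uniqueness: any permutation all of whose matched sums are powers of two equals tau. -/
lemma uniq (n : ℕ) : ∀ (σ : Equiv.Perm (Fin n)),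
    (∀ i : Fin n, ∃ k : ℕ, ((i : ℕ) + 1) + ((σ i : ℕ) + 1) = 2 ^ (k + 1)) →
    ∀ i : Fin n, (σ i : ℕ) + 1 = ff n ((i : ℕ) + 1) := by
  induction n using Nat.strong_induction_on with
  | _ n ih =>
    intro σ hσ i
    have hn : n ≠ 0 := by
      intro h; subst h; exact absurd i.2 (by omega)
    have hP := lt_PP n
    have hP2 := PP_le n (by omega)
    have hs : 1 ≤ Nat.size n := Nat.size_pos.mpr (by omega)
    have hPeq := PP_eq n (by omega)
    have hhalf := half_PP_le n (by omega)
    have hmm : mm n = PP n - 1 - n := rfl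
    -- Step A: forced for large rows
    have forcedA : ∀ j : Fin n, 2 ^ (Nat.size n - 1) ≤ (j : ℕ) + 1 →
        (σ j : ℕ) + 1 = PP n - ((j : ℕ) + 1) := by
      intro j hj
      obtain ⟨k, hk⟩ := hσ j
      have hb1 : 1 ≤ (σ j : ℕ) + 1 := by omega
      have hb2 : (σ j : ℕ) + 1 ≤ n := by have := (σ j).2; omega
      have hlow : 2 ^ (Nat.size n - 1) < 2 ^ (k + 1) := by omega
      have hhigh : 2 ^ (k + 1) < 2 * PP n := by
        have : (j : ℕ) + 1 ≤ n := by have := j.2; omega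
        omega
      -- conclude 2^(k+1) = PP n = 2^(size n)
      have h1 : Nat.size n - 1 < k + 1 := by
        by_contra hcon
        push_neg at hcon
        have : (2:ℕ) ^ (k+1) ≤ 2 ^ (Nat.size n - 1) := Nat.pow_le_pow_right (by norm_num) hcon
        omega
      have h2 : k + 1 < Nat.size n + 1 := by
        by_contra hcon
        push_neg at hcon
        have : 2 * PP n = 2 ^ (Nat.size n + 1) := by rw [PP]; ring
        have := Nat.pow_le_pow_right (show 0 < 2 by norm_num) hcon
        omega
      have : k + 1 = Nat.size n := by omega
      rw [this] at hk
      show _ = 2 ^ Nat.size n - _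
      rw [PP] at *
      omega
    -- Step B: forced for mid rows via inverse
    have forced : ∀ j : Fin n, mm n < (j : ℕ) + 1 →
        (σ j : ℕ) + 1 = PP n - ((j : ℕ) + 1) := by
      intro j hj
      by_cases hcase : 2 ^ (Nat.size n - 1) ≤ (j : ℕ) + 1
      · exact forcedA j hcase
      · -- j+1 ∈ [mm n + 1, 2^(s-1) - 1]; consider l with l+1 = PP n - (j+1)
        push_neg at hcase
        have hl1 : 2 ^ (Nat.size n - 1) ≤ PP n - ((j : ℕ) + 1) := by omega
        have hl2 : PP n - ((j : ℕ) + 1) ≤ n := by omega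
        set l : Fin n := ⟨PP n - ((j : ℕ) + 1) - 1, by omega⟩ with hl
        -- apply forcedA at σ⁻¹ l? rather: at i' := σ⁻¹ l
        set i' : Fin n := σ⁻¹ l with hi'
        have hsl : σ i' = l := by rw [hi']; simp
        obtain ⟨k, hk⟩ := hσ i'
        rw [hsl] at hk
        have hlval : (l : ℕ) + 1 = PP n - ((j : ℕ) + 1) := by rw [hl]; simp; omega
        -- i' + 1 forced: (i'+1) + (l+1) = 2^(k+1), l+1 ≥ 2^(s-1)
        -- same power argument: 2^(k+1) ∈ (2^(s-1), 2 PP n) so = PP n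
        have hb2 : (i' : ℕ) + 1 ≤ n := by have := i'.2; omega
        have hlow : 2 ^ (Nat.size n - 1) < 2 ^ (k + 1) := by omega
        have hhigh : 2 ^ (k + 1) < 2 * PP n := by omega
        have h1 : Nat.size n - 1 < k + 1 := by
          by_contra hcon
          push_neg at hcon
          have : (2:ℕ) ^ (k+1) ≤ 2 ^ (Nat.size n - 1) := Nat.pow_le_pow_right (by norm_num) hcon
          omega
        have h2 : k + 1 < Nat.size n + 1 := by
          by_contra hcon
          push_neg at hcon
          have : 2 * PP n = 2 ^ (Nat.size n + 1) := by rw [PP]; ring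
          have := Nat.pow_le_pow_right (show 0 < 2 by norm_num) hcon
          omega
        have hks : k + 1 = Nat.size n := by omega
        rw [hks] at hk
        have hPP : (PP n : ℕ) = 2 ^ Nat.size n := rfl
        have hieq : (i' : ℕ) = (j : ℕ) := by omega
        have : i' = j := Fin.ext hieq
        rw [this] at hsl
        rw [hsl]
        omega
    rw [ff_eq n _ hn]
    by_cases hi : mm n < (i : ℕ) + 1
    · rw [if_pos hi]
      exact forced i hi
    · rw [if_neg hi]
      push_neg at hi
      -- σ maps small indices to small indices
      have hsmall : ∀ j : Fin n, (j : ℕ) + 1 ≤ mm n → (σ j : ℕ) + 1 ≤ mm n := by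
        intro j hj
        by_contra hcon
        push_neg at hcon
        -- σ j is big; but big values are hit by big indices
        set w : Fin n := ⟨PP n - ((σ j : ℕ) + 1) - 1, by omega⟩ with hw
        have hw1 : mm n < (w : ℕ) + 1 := by
          rw [hw]; simp; have := (σ j).2; omega
        have := forced w hw1
        have hwv : (w : ℕ) + 1 = PP n - ((σ j : ℕ) + 1) := by
          rw [hw]; simp; have := (σ j).2; omega
        have heq : (σ w : ℕ) = (σ j : ℕ) := by have := (σ j).2; omega
        have : w = j := σ.injective (Fin.ext heq)
        rw [this] at hwv
        omega
      -- build restricted permutation on Fin (mm n)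
      have hmlt : mm n < n := mm_lt n (by omega)
      set m := mm n with hm
      have hmap : ∀ j : Fin m, (σ (⟨(j : ℕ), by omega⟩ : Fin n) : ℕ) < m := by
        intro j
        have := hsmall ⟨(j : ℕ), by omega⟩ (by simp)
        omega
      have hmapinv : ∀ j : Fin m, (σ⁻¹ (⟨(j : ℕ), by omega⟩ : Fin n) : ℕ) < m := by
        intro j
        by_contra hcon
        push_neg at hcon
        set v : Fin n := σ⁻¹ ⟨(j : ℕ), by omega⟩ with hv
        have hforced := forced v (by omega)
        have : σ v = ⟨(j : ℕ), by omega⟩ := by rw [hv]; simp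
        rw [this] at hforced
        simp at hforced
        have := j.2
        omega
      set σ' : Equiv.Perm (Fin m) :=
        { toFun := fun j => ⟨(σ (⟨(j : ℕ), by omega⟩ : Fin n) : ℕ), hmap j⟩
          invFun := fun j => ⟨(σ⁻¹ (⟨(j : ℕ), by omega⟩ : Fin n) : ℕ), hmapinv j⟩
          left_inv := by
            intro j
            ext
            simp
          right_inv := by
            intro j
            ext
            simp } with hσ'def
      have hσ' : ∀ j : Fin m, ∃ k : ℕ, ((j : ℕ) + 1) + ((σ' j : ℕ) + 1) = 2 ^ (k + 1) := by
        intro j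
        obtain ⟨k, hk⟩ := hσ ⟨(j : ℕ), by omega⟩
        exact ⟨k, by simpa [hσ'def] using hk⟩
      have hival : (i : ℕ) < m := by omega
      have hres := ih m hmlt σ' hσ' ⟨(i : ℕ), hival⟩
      have hemb : (⟨((⟨(i : ℕ), hival⟩ : Fin m) : ℕ), by omega⟩ : Fin n) = i := by
        ext; simp
      simp only [hσ'def, Equiv.coe_fn_mk] at hres
      rw [hemb] at hres
      simpa using hres

lemma A_eq_one {x : ℕ} (h : ∃ k : ℕ, x + 2 = 2 ^ (k + 1)) : A x = 1 := by
  unfold A; rw [if_pos h]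

lemma A_ne_zero {x : ℕ} (h : A x ≠ 0) : ∃ k : ℕ, x + 2 = 2 ^ (k + 1) := by
  by_contra hcon
  exact h (by unfold A; rw [if_neg hcon])

lemma det_eq_sign (n : ℕ) :
    Matrix.det (Matrix.of fun i j : Fin n => A ((i : ℕ) + j)) =
      (Equiv.Perm.sign (tau n) : ℤ) := by
  rw [Matrix.det_apply]
  rw [Fintype.sum_eq_single (tau n)]
  · have hprod : ∀ i : Fin n, (Matrix.of fun i j : Fin n => A ((i : ℕ) + j)) (tau n i) i = 1 := by
      intro i
      have hr := ff_range n ((i : ℕ) + 1) (by omega) (by omega)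
      obtain ⟨k, hk⟩ := ff_pow n ((i : ℕ) + 1) (by omega) (by omega)
      simp only [Matrix.of_apply]
      apply A_eq_one
      refine ⟨k, ?_⟩
      rw [tau_apply]
      omega
    rw [Finset.prod_congr rfl (fun i _ => hprod i)]
    simp [Units.smul_def]
  · intro σ hσ
    suffices h : (∏ i, (Matrix.of fun i j : Fin n => A ((i : ℕ) + j)) (σ i) i) = 0 by
      rw [h]; simp
    by_contra hcon
    have hall := Finset.prod_ne_zero_iff.mp hcon
    have hpow : ∀ i : Fin n, ∃ k : ℕ, ((i : ℕ) + 1) + ((σ i : ℕ) + 1) = 2 ^ (k + 1) := by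
      intro i
      obtain ⟨k, hk⟩ := A_ne_zero (hall i (Finset.mem_univ i))
      exact ⟨k, by omega⟩
    have := uniq n σ hpow
    apply hσ
    ext i
    have h1 := this i
    have h2 := ff_range n ((i : ℕ) + 1) (by omega) (by omega)
    rw [tau_apply]
    omega

/-- reversal of the interval [a,b] inside Fin n -/
def revFun (n a b : ℕ) (i : Fin n) : Fin n :=
  if h : a ≤ (i : ℕ) ∧ (i : ℕ) ≤ b ∧ b < n then ⟨a + b - (i : ℕ), by omega⟩ else i

lemma revFun_invol (n a b : ℕ) : Function.Involutive (revFun n a b) := by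
  intro i
  unfold revFun
  split
  · rename_i h
    have : a ≤ a + b - (i : ℕ) ∧ a + b - (i : ℕ) ≤ b ∧ b < n := by omega
    rw [dif_pos this]
    ext
    simp
    omega
  · rfl

def rev (n a b : ℕ) : Equiv.Perm (Fin n) := (revFun_invol n a b).toPerm _

lemma rev_apply (n a b : ℕ) (i : Fin n) : rev n a b i = revFun n a b i := rfl

lemma rev_val (n a b : ℕ) (hb : b < n) (i : Fin n) :
    ((rev n a b i : Fin n) : ℕ) = if a ≤ (i : ℕ) ∧ (i : ℕ) ≤ b then a + b - (i : ℕ) else i := by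
  rw [rev_apply]
  unfold revFun
  by_cases h : a ≤ (i : ℕ) ∧ (i : ℕ) ≤ b
  · rw [dif_pos ⟨h.1, h.2, hb⟩, if_pos h]
  · rw [dif_neg (by tauto), if_neg h]

lemma swap_val (n : ℕ) (x y i : Fin n) :
    ((Equiv.swap x y i : Fin n) : ℕ) =
      if (i : ℕ) = (x : ℕ) then (y : ℕ) else if (i : ℕ) = (y : ℕ) then (x : ℕ) else (i : ℕ) := by
  by_cases h1 : i = x
  · subst h1
    rw [Equiv.swap_apply_left, if_pos rfl]
  · by_cases h2 : i = y
    · subst h2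
      rw [Equiv.swap_apply_right]
      by_cases h3 : (i : ℕ) = (x : ℕ)
      · have : i = x := Fin.ext h3
        contradiction
      · rw [if_neg h3, if_pos rfl]
    · rw [Equiv.swap_apply_of_ne_of_ne h1 h2,
        if_neg (fun h => h1 (Fin.ext h)), if_neg (fun h => h2 (Fin.ext h))]

lemma sign_rev (n : ℕ) : ∀ d a b, b - a ≤ d → b < n →
    Equiv.Perm.sign (rev n a b) = (-1) ^ ((b + 1 - a) / 2) := by
  intro d
  induction d using Nat.strong_induction_on with
  | _ d ih =>
    intro a b hd hbn
    by_cases hab : b ≤ a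
    · have : rev n a b = 1 := by
        apply Equiv.ext
        intro i
        apply Fin.ext
        rw [rev_val n a b hbn i]
        simp only [Equiv.Perm.coe_one, id_eq]
        split <;> omega
      rw [this]
      have : (b + 1 - a) / 2 = 0 := by omega
      rw [this]
      simp
    · push_neg at hab
      have hswap : rev n a b =
          Equiv.swap (⟨a, by omega⟩ : Fin n) ⟨b, by omega⟩ * rev n (a+1) (b-1) := by
        apply Equiv.ext
        intro i
        apply Fin.ext
        rw [Equiv.Perm.mul_apply, rev_val n a b hbn i, swap_val,
          rev_val n (a+1) (b-1) (by omega) i]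
        simp only []
        split_ifs <;> omega
      rw [hswap, map_mul]
      rw [Equiv.Perm.sign_swap (by simp [Fin.ext_iff]; omega)]
      have hd' : b - 1 - (a + 1) < d := by omega
      rw [ih (b - 1 - (a+1)) hd' (a+1) (b-1) le_rfl (by omega)]
      have hx : (b + 1 - a) / 2 = (b - 1 + 1 - (a + 1)) / 2 + 1 := by omega
      rw [hx, pow_succ]
      exact (mul_comm _ _)

/-- embedding equivalence Fin m ≃ {i : Fin n // i < m} -/
def emb (n m : ℕ) (h : m ≤ n) : Fin m ≃ {i : Fin n // (i : ℕ) < m} where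
  toFun j := ⟨⟨(j : ℕ), by omega⟩, j.2⟩
  invFun s := ⟨(s.1 : ℕ), s.2⟩
  left_inv j := by ext; simp
  right_inv s := by ext; simp

lemma sign_tau (n : ℕ) : (Equiv.Perm.sign (tau n) : ℤˣ) = (-1) ^ (TT n) := by
  induction n using Nat.strong_induction_on with
  | _ n ih =>
    by_cases hn : n = 0
    · subst hn
      have : tau 0 = 1 := Subsingleton.elim _ _
      rw [this]
      have : TT 0 = 0 := by unfold TT; simp
      rw [this]
      simp
    · have hP := lt_PP n
      have hP2 := PP_le n (by omega)
      have hs : 1 ≤ Nat.size n := Nat.size_pos.mpr (by omega)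
      have hPeq := PP_eq n (by omega)
      have hhalf := half_PP_le n (by omega)
      have hmm : mm n = PP n - 1 - n := rfl
      have hmlt : mm n < n := mm_lt n (by omega)
      set m := mm n with hm
      set E : Equiv.Perm (Fin n) := (tau m).extendDomain (emb n m (by omega)) with hE
      have hEsmall : ∀ i : Fin n, (i : ℕ) < m → ((E i : Fin n) : ℕ) = ff m ((i : ℕ) + 1) - 1 := by
        intro i hi
        rw [hE, Equiv.Perm.extendDomain_apply_subtype (tau m) (emb n m (by omega)) (p := fun i : Fin n => (i : ℕ) < m) hi]
        rfl
      have hEbig : ∀ i : Fin n, m ≤ (i : ℕ) → E i = i := by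
        intro i hi
        rw [hE]
        exact Equiv.Perm.extendDomain_apply_not_subtype _ _ (by omega)
      have hdecomp : tau n = rev n m (n - 1) * E := by
        apply Equiv.ext
        intro i
        apply Fin.ext
        rw [Equiv.Perm.mul_apply]
        by_cases hi : (i : ℕ) < m
        · have h1 := hEsmall i hi
          have hr := ff_range m ((i : ℕ) + 1) (by omega) (by omega)
          rw [rev_val n m (n-1) (by omega)]
          rw [h1]
          rw [if_neg (by omega)]
          rw [tau_apply]
          rw [ff_eq n _ hn]
          rw [if_neg (by omega)]
        · rw [hEbig i (by omega)]
          rw [rev_val n m (n-1) (by omega)]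
          rw [if_pos (by have := i.2; omega)]
          rw [tau_apply]
          rw [ff_eq n _ hn, if_pos (by omega)]
          have := i.2
          omega
      rw [hdecomp, map_mul]
      rw [hE, Equiv.Perm.sign_extendDomain]
      rw [sign_rev n (n - 1 - m) m (n-1) le_rfl (by omega)]
      rw [ih m hmlt]
      rw [TT_eq n hn]
      rw [pow_add]
      congr 1
      congr 1
      omega

def c10 (a K : ℕ) : ℕ :=
  ((Finset.range K).filter (fun j => a.testBit (j + 1) = true ∧ a.testBit j = false)).card

lemma testBit_imp_le {a t : ℕ} (h : a.testBit t = true) : 2 ^ t ≤ a := by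
  by_contra hcon
  push_neg at hcon
  rw [Nat.testBit_lt_two_pow hcon] at h
  exact Bool.false_ne_true h

lemma c10_stable (a K K' : ℕ) (h1 : a ≤ K) (h2 : K ≤ K') : c10 a K' = c10 a K := by
  unfold c10
  congr 1
  ext j
  simp only [Finset.mem_filter, Finset.mem_range]
  constructor
  · rintro ⟨hj, hp⟩
    refine ⟨?_, hp⟩
    have := testBit_imp_le hp.1
    have : j + 1 ≤ a := by
      have := Nat.lt_of_lt_of_le (Nat.lt_two_pow_self (n := j+1)) this
      omega
    omega
  · rintro ⟨hj, hp⟩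
    exact ⟨by omega, hp⟩

lemma delta_c10 (n : ℕ) :
    c10 n (n + 1) + (if n.testBit 1 = true ∧ n.testBit 0 = true then 1 else 0) =
      deltaFn n + (if n.testBit 1 = true ∧ n.testBit 0 = false then 1 else 0) := by
  have hsplit : c10 n (n + 1) =
      ((Finset.Icc 1 n).filter (fun i => n.testBit (i + 1) = true ∧ n.testBit i = false)).card +
        (if n.testBit 1 = true ∧ n.testBit 0 = false then 1 else 0) := by
    unfold c10
    by_cases h0 : n.testBit 1 = true ∧ n.testBit 0 = false
    · rw [if_pos h0]
      have : (Finset.range (n + 1)).filter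
            (fun j => n.testBit (j + 1) = true ∧ n.testBit j = false) =
          insert 0 ((Finset.Icc 1 n).filter
            (fun j => n.testBit (j + 1) = true ∧ n.testBit j = false)) := by
        ext j
        simp only [Finset.mem_filter, Finset.mem_range, Finset.mem_insert, Finset.mem_Icc]
        constructor
        · rintro ⟨hj, hp⟩
          by_cases hj0 : j = 0
          · exact Or.inl hj0
          · exact Or.inr ⟨⟨by omega, by omega⟩, hp⟩
        · rintro (hj0 | ⟨hj, hp⟩)
          · subst hj0
            exact ⟨by omega, h0⟩
          · exact ⟨by omega, hp⟩
      rw [this, Finset.card_insert_of_notMem (by simp)]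
    · rw [if_neg h0, Nat.add_zero]
      have hset : (Finset.range (n + 1)).filter
            (fun j => n.testBit (j + 1) = true ∧ n.testBit j = false) =
          (Finset.Icc 1 n).filter
            (fun j => n.testBit (j + 1) = true ∧ n.testBit j = false) := by
        ext j
        simp only [Finset.mem_filter, Finset.mem_range, Finset.mem_Icc]
        constructor
        · rintro ⟨hj, hp⟩
          have hj0 : j ≠ 0 := by
            intro h; subst h; exact h0 hp
          exact ⟨⟨by omega, by omega⟩, hp⟩
        · rintro ⟨hj, hp⟩
          exact ⟨by omega, hp⟩
      rw [hset]
      omega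
  rw [hsplit]
  unfold deltaFn
  omega

lemma c10_shift (a b : ℕ) (hb : b ≤ 1) :
    c10 (2 * a + b) (2 * a + b + 1) =
      c10 a (2 * a + b) + (if a.testBit 0 = true ∧ b = 0 then 1 else 0) := by
  have hdiv : (2 * a + b) / 2 = a := by omega
  have hbit : ∀ j, (2 * a + b).testBit (j + 1) = a.testBit j := by
    intro j
    rw [Nat.testBit_succ, hdiv]
  have hbit0 : (2 * a + b).testBit 0 = decide (b = 1) := by
    rw [Nat.testBit_zero]
    congr 1
    simp only [eq_iff_iff]
    omega
  unfold c10
  rw [Finset.card_filter, Finset.card_filter, Finset.sum_range_succ']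
  congr 1
  · apply Finset.sum_congr rfl
    intro j _
    congr 1
    simp only [eq_iff_iff]
    rw [hbit (j+1), hbit j]
  · rw [hbit 0, hbit0]
    by_cases h : a.testBit 0 = true ∧ b = 0
    · rw [if_pos h, if_pos]
      refine ⟨h.1, by simp [h.2]⟩
    · rw [if_neg h, if_neg]
      intro hcon
      apply h
      refine ⟨hcon.1, ?_⟩
      have := hcon.2
      simp at this
      omega

lemma size_double (a b : ℕ) (ha : 1 ≤ a) (hb : b ≤ 1) :
    Nat.size (2 * a + b) = Nat.size a + 1 := by
  have h1 : Nat.size (2 * a + b) ≤ Nat.size a + 1 := by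
    apply Nat.size_le.mpr
    have := lt_PP a
    have hpp : (2:ℕ) ^ (Nat.size a + 1) = 2 * 2 ^ Nat.size a := by rw [pow_succ]; ring
    have : a < 2 ^ Nat.size a := lt_PP a
    show 2 * a + b < 2 ^ (Nat.size a + 1)
    omega
  have h2 : Nat.size a < Nat.size (2 * a + b) := by
    apply Nat.lt_size.mpr
    have := half_PP_le a ha
    have hpp := PP_eq a ha
    show (2:ℕ) ^ Nat.size a ≤ 2 * a + b
    have : (2:ℕ) ^ Nat.size a = PP a := rfl
    omega
  omega

lemma mm_shift (a b : ℕ) (ha : 1 ≤ a) (hb : b ≤ 1) :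
    mm (2 * a + b) = 2 * mm a + (1 - b) := by
  have h1 : mm (2*a+b) = PP (2*a+b) - 1 - (2*a+b) := rfl
  have h2 : mm a = PP a - 1 - a := rfl
  have h3 : PP (2*a+b) = 2 * PP a := by
    show (2:ℕ) ^ Nat.size (2*a+b) = 2 * 2 ^ Nat.size a
    rw [size_double a b ha hb, pow_succ]
    ring
  have h4 := lt_PP a
  omega

lemma mm_bit (a i : ℕ) (hi : i < Nat.size a) : (mm a).testBit i = ! a.testBit i := by
  have h2 : a < 2 ^ Nat.size a := lt_PP a
  have h1 : mm a = 2 ^ Nat.size a - (a + 1) := by unfold mm PP; omega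
  rw [h1, Nat.testBit_two_pow_sub_succ h2]
  simp [hi]

lemma deltaShift (x c : ℕ) (hc : c ≤ 1) :
    deltaFn (2 * x + c) % 2 =
      (deltaFn x + (if x.testBit 1 = true then 1 else 0) +
        (if x.testBit 0 = true ∧ c = 1 then 1 else 0)) % 2 := by
  by_cases hx : x = 0
  · subst hx
    interval_cases c <;> decide
  · have e1 := delta_c10 (2*x+c)
    have e2 := c10_shift x c hc
    have e3 := c10_stable x (x+1) (2*x+c) (by omega) (by omega)
    have e4 := delta_c10 x
    have hdiv : (2*x+c) / 2 = x := by omega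
    have hb1 : (2*x+c).testBit 1 = x.testBit 0 := by
      rw [show (1:ℕ) = Nat.succ 0 from rfl, Nat.testBit_succ, hdiv]
    have hb0 : (2*x+c).testBit 0 = decide (c = 1) := by
      rw [Nat.testBit_zero]
      congr 1
      simp only [eq_iff_iff]
      omega
    rcases Bool.eq_false_or_eq_true (x.testBit 0) with h0 | h0 <;>
      rcases Bool.eq_false_or_eq_true (x.testBit 1) with h1 | h1 <;>
        interval_cases c <;>
          simp only [h0, h1, hb0, hb1] at e1 e2 e3 e4 ⊢ <;>
            simp at e1 e2 e3 e4 ⊢ <;> omega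

lemma size_two : Nat.size 2 = 2 := by
  have h1 : Nat.size 2 ≤ 2 := Nat.size_le.mpr (by norm_num)
  have h2 : 1 < Nat.size 2 := Nat.lt_size.mpr (by norm_num)
  omega

lemma size_three : Nat.size 3 = 2 := by
  have h1 : Nat.size 3 ≤ 2 := Nat.size_le.mpr (by norm_num)
  have h2 : 1 < Nat.size 3 := Nat.lt_size.mpr (by norm_num)
  omega

lemma key_parity : ∀ n, 2 ≤ n → (deltaFn n + deltaFn (mm n)) % 2 = n % 2 := by
  intro n
  induction n using Nat.strong_induction_on with
  | _ n ih =>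
    intro hn
    by_cases hsmall : n < 4
    · interval_cases n
      · have hm : mm 2 = 1 := by
          have : mm 2 = PP 2 - 1 - 2 := rfl
          have : PP 2 = 4 := by show (2:ℕ)^(Nat.size 2) = 4; rw [size_two]; norm_num
          unfold mm
          omega
        rw [hm]
        decide
      · have hm : mm 3 = 0 := by
          have : PP 3 = 4 := by show (2:ℕ)^(Nat.size 3) = 4; rw [size_three]; norm_num
          unfold mm
          omega
        rw [hm]
        decide
    · push_neg at hsmall
      set a := n / 2 with hadef
      set b := n % 2 with hbdef
      have hn2 : n = 2 * a + b := by omega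
      have ha : 2 ≤ a := by omega
      have hb : b ≤ 1 := by omega
      have hsa : 2 ≤ Nat.size a := by
        have := Nat.lt_size (m := 1) (n := a)
        omega
      have hIH := ih a (by omega) ha
      have hmn : mm n = 2 * mm a + (1 - b) := by rw [hn2]; exact mm_shift a b (by omega) hb
      have hd1 := deltaShift a b hb
      have hd2 := deltaShift (mm a) (1 - b) (by omega)
      have hbit0 : (mm a).testBit 0 = ! a.testBit 0 := mm_bit a 0 (by omega)
      have hbit1 : (mm a).testBit 1 = ! a.testBit 1 := mm_bit a 1 (by omega)
      have hpar : a.testBit 0 = decide (a % 2 = 1) := Nat.testBit_zero a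
      rw [hmn, hn2]
      rcases Bool.eq_false_or_eq_true (a.testBit 0) with h0 | h0 <;>
        rcases Bool.eq_false_or_eq_true (a.testBit 1) with h1 | h1 <;>
          interval_cases b <;>
            simp only [h0, h1, hbit0, hbit1] at hd1 hd2 hpar ⊢ <;>
              simp at hd1 hd2 hpar ⊢ <;> omega

lemma TT_delta (n : ℕ) : TT n % 2 = deltaFn n % 2 := by
  induction n using Nat.strong_induction_on with
  | _ n ih =>
    by_cases h0 : n = 0
    · subst h0
      have : TT 0 = 0 := by unfold TT; simp
      rw [this]
      decide
    · by_cases h1 : n = 1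
      · subst h1
        have hs : Nat.size 1 = 1 := Nat.size_one
        have hP : PP 1 = 2 := by show (2:ℕ)^(Nat.size 1) = 2; rw [hs]; norm_num
        have hm : mm 1 = 0 := by unfold mm; omega
        rw [TT_eq 1 (by omega), hm, hs]
        have : TT 0 = 0 := by unfold TT; simp
        rw [this]
        decide
      · have hn : 2 ≤ n := by omega
        have hs : 2 ≤ Nat.size n := by
          have := Nat.lt_size (m := 1) (n := n)
          omega
        have hE : 2 ^ (Nat.size n - 1) % 2 = 0 := by
          have : ∃ t, Nat.size n - 1 = t + 1 := ⟨Nat.size n - 2, by omega⟩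
          obtain ⟨t, ht⟩ := this
          rw [ht, pow_succ]
          omega
        have hE2 : 2 ^ (Nat.size n - 1) ≤ n := half_PP_le n (by omega)
        have hTT := TT_eq n (by omega)
        have hIH := ih (mm n) (mm_lt n (by omega))
        have hkey := key_parity n hn
        omega

theorem stmt6 (n : ℕ) : D n = (-1 : ℤ) ^ deltaFn n := by
  have h1 : D n = (Equiv.Perm.sign (tau n) : ℤ) := by
    unfold D
    exact det_eq_sign n
  have h2 := sign_tau n
  have h3 := TT_delta n
  rw [h1, h2]
  have hcast : (((-1 : ℤˣ) ^ TT n : ℤˣ) : ℤ) = (-1 : ℤ) ^ TT n := by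
    push_cast
    ring
  rw [hcast]
  rcases Nat.even_or_odd (TT n) with he | ho
  · have hd : Even (deltaFn n) := by
      rw [Nat.even_iff] at *
      omega
    rw [he.neg_one_pow, hd.neg_one_pow]
  · have hd : Odd (deltaFn n) := by
      rw [Nat.odd_iff] at *
      omega
    rw [ho.neg_one_pow, hd.neg_one_pow]
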